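/- Let V be a real inner product space, let α and β be nonzero orthogonal vectors of V, let u and v be positive real numbers, and set σ = u·α + v·β. If χ ∈ V satisfies (1/u)·(2⟪χ,α⟫/⟪α,α⟫) = (1/v)·(2⟪χ,β⟫/⟪β,β⟫), then s_α(s_β(χ)) = s_σ(χ) = χ − (2⟪χ,σ⟫/⟪σ,σ⟫)·σ. Moreover, the vector σ itself satisfies this hypothesis, so the set of such χ is a linear subspace of V containing σ and stable under s_σ. (This is the key observation in the proof that the reflection associated to a spherical root extends to an element of the big Weyl group.) -/

import Mathlib

open scoped RealInnerProductSpace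

/-- The orthogonal reflection in a (nonzero) vector `w` of a real inner product space:
`s_w x = x - (2⟪x,w⟫/⟪w,w⟫) • w`. -/
noncomputable def orthoRefl {V : Type*} [NormedAddCommGroup V] [InnerProductSpace ℝ V]
    (w x : V) : V :=
  x - (2 * ⟪x, w⟫ / ⟪w, w⟫) • w

theorem reflection_product_eq_reflection_of_sum
    {V : Type*} [NormedAddCommGroup V] [InnerProductSpace ℝ V]
    (α β : V) (hα : α ≠ 0) (hβ : β ≠ 0) (horth : ⟪α, β⟫ = 0)
    (u v : ℝ) (hu : 0 < u) (hv : 0 < v)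
    (σ : V) (hσ : σ = u • α + v • β) :
    (∀ χ : V,
      (1 / u) * (2 * ⟪χ, α⟫ / ⟪α, α⟫) = (1 / v) * (2 * ⟪χ, β⟫ / ⟪β, β⟫) →
        orthoRefl α (orthoRefl β χ) = orthoRefl σ χ ∧
        orthoRefl σ χ = χ - (2 * ⟪χ, σ⟫ / ⟪σ, σ⟫) • σ) ∧
    ((1 / u) * (2 * ⟪σ, α⟫ / ⟪α, α⟫) = (1 / v) * (2 * ⟪σ, β⟫ / ⟪β, β⟫)) ∧
    (∃ U : Submodule ℝ V,
      (∀ χ : V, χ ∈ U ↔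
        (1 / u) * (2 * ⟪χ, α⟫ / ⟪α, α⟫) = (1 / v) * (2 * ⟪χ, β⟫ / ⟪β, β⟫)) ∧
      σ ∈ U ∧ ∀ χ ∈ U, orthoRefl σ χ ∈ U) := by
  have hapos : (0:ℝ) < ⟪α, α⟫ := by
    rw [real_inner_self_eq_norm_sq]
    have : ‖α‖ ≠ 0 := norm_ne_zero_iff.mpr hα
    positivity
  have hbpos : (0:ℝ) < ⟪β, β⟫ := by
    rw [real_inner_self_eq_norm_sq]
    have : ‖β‖ ≠ 0 := norm_ne_zero_iff.mpr hβ
    positivity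
  have ha : (⟪α, α⟫ : ℝ) ≠ 0 := ne_of_gt hapos
  have hb : (⟪β, β⟫ : ℝ) ≠ 0 := ne_of_gt hbpos
  have hba : ⟪β, α⟫ = 0 := by rw [real_inner_comm]; exact horth
  have hσα : ⟪σ, α⟫ = u * ⟪α, α⟫ := by
    rw [hσ]; simp [inner_add_left, real_inner_smul_left, hba]
  have hσβ : ⟪σ, β⟫ = v * ⟪β, β⟫ := by
    rw [hσ]; simp [inner_add_left, real_inner_smul_left, horth]
  have hσσ : ⟪σ, σ⟫ = u^2 * ⟪α, α⟫ + v^2 * ⟪β, β⟫ := by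
    rw [hσ]
    simp [inner_add_left, inner_add_right, real_inner_smul_left, real_inner_smul_right,
      horth, hba, -inner_self_eq_norm_sq_to_K]
    ring
  have hSpos : (0:ℝ) < ⟪σ, σ⟫ := by
    rw [hσσ]; positivity
  have hS : (⟪σ, σ⟫ : ℝ) ≠ 0 := ne_of_gt hSpos
  have hS' : u ^ 2 * ⟪α, α⟫ + v ^ 2 * ⟪β, β⟫ ≠ 0 := hσσ ▸ hS
  have hu' := hu.ne'
  have hv' := hv.ne'
  -- the linear functional whose kernel is the subspace
  have key : ∀ χ : V,
      (1 / u) * (2 * ⟪χ, α⟫ / ⟪α, α⟫) = (1 / v) * (2 * ⟪χ, β⟫ / ⟪β, β⟫) →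
        orthoRefl α (orthoRefl β χ) = orthoRefl σ χ ∧
        orthoRefl σ χ = χ - (2 * ⟪χ, σ⟫ / ⟪σ, σ⟫) • σ := by
    intro χ h
    refine ⟨?_, rfl⟩
    have h' : v * ⟪β, β⟫ * ⟪χ, α⟫ = u * ⟪α, α⟫ * ⟪χ, β⟫ := by
      field_simp at h
      linarith
    have hχσ : ⟪χ, σ⟫ = u * ⟪χ, α⟫ + v * ⟪χ, β⟫ := by
      rw [hσ]; simp [inner_add_right, real_inner_smul_right]
    have e1 : 2 * ⟪χ, α⟫ / ⟪α, α⟫ = (2 * ⟪χ, σ⟫ / ⟪σ, σ⟫) * u := by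
      rw [hχσ, hσσ, div_mul_eq_mul_div, div_eq_div_iff ha hS']
      linear_combination 2 * v * h'
    have e2 : 2 * ⟪χ, β⟫ / ⟪β, β⟫ = (2 * ⟪χ, σ⟫ / ⟪σ, σ⟫) * v := by
      rw [hχσ, hσσ, div_mul_eq_mul_div, div_eq_div_iff hb hS']
      linear_combination (-2) * u * h'
    have goal1 : orthoRefl α (orthoRefl β χ) =
        χ - (2 * ⟪χ, β⟫ / ⟪β, β⟫) • β - (2 * ⟪χ, α⟫ / ⟪α, α⟫) • α := by
      unfold orthoRefl
      rw [show ⟪χ - (2 * ⟪χ, β⟫ / ⟪β, β⟫) • β, α⟫ = ⟪χ, α⟫ from by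
        simp [inner_sub_left, real_inner_smul_left, hba]]
    have goal2 : orthoRefl σ χ =
        χ - ((2 * ⟪χ, σ⟫ / ⟪σ, σ⟫) * v) • β - ((2 * ⟪χ, σ⟫ / ⟪σ, σ⟫) * u) • α := by
      show χ - (2 * ⟪χ, σ⟫ / ⟪σ, σ⟫) • σ = _
      rw [hσ, smul_add, smul_smul, smul_smul]
      abel
    rw [goal1, goal2, e1, e2]
  refine ⟨key, ?_, ?_⟩
  · rw [hσα, hσβ]
    field_simp
  · let f : V →ₗ[ℝ] ℝ :=
      { toFun := fun χ => (1 / u) * (2 * ⟪χ, α⟫ / ⟪α, α⟫) - (1 / v) * (2 * ⟪χ, β⟫ / ⟪β, β⟫)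
        map_add' := by intro x y; simp [inner_add_left]; ring
        map_smul' := by intro c x; simp [real_inner_smul_left]; ring }
    refine ⟨LinearMap.ker f, fun χ => ?_, ?_, ?_⟩
    · simp only [LinearMap.mem_ker, LinearMap.coe_mk, AddHom.coe_mk, f]
      exact sub_eq_zero
    · simp only [LinearMap.mem_ker, LinearMap.coe_mk, AddHom.coe_mk, f]
      rw [sub_eq_zero, hσα, hσβ]
      field_simp
    · intro χ hχ
      have : orthoRefl σ χ = χ - (2 * ⟪χ, σ⟫ / ⟪σ, σ⟫) • σ := rfl
      rw [this]
      refine Submodule.sub_mem _ hχ (Submodule.smul_mem _ _ ?_)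
      simp only [LinearMap.mem_ker, LinearMap.coe_mk, AddHom.coe_mk, f]
      rw [sub_eq_zero, hσα, hσβ]
      field_simp
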